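/- Let n ∈ ℕ, b ∈ K, and F(x,y) = y·(n-1)!·Σ_{ν=0}^{n-1} (-1)^{n+ν} (n+b-ν+1)_ν x^ν/ν! + (b+1)_n x^n. Then x(1-x)·∂F/∂x + y(n + b x - y)·∂F/∂y = (n - n x - y)·F, i.e., the curve {F = 0} is an invariant algebraic curve of the Lotka–Volterra system ẋ = x(1-x), ẏ = y(n + b x - y), with cofactor K = n - n x - y. -/

import Mathlib

open MvPolynomial

/-- Pochhammer symbol `(c)_n = c(c+1)⋯(c+n-1)`. -/
noncomputable def poch (c : ℝ) (n : ℕ) : ℝ := ∏ i ∈ Finset.range n, (c + i)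

lemma poch_succ' (c : ℝ) (k : ℕ) : poch c (k + 1) = c * poch (c + 1) k := by
  simp only [poch, Finset.prod_range_succ']
  rw [mul_comm]
  congr 1
  · simp
  · exact Finset.prod_congr rfl fun x _ => by push_cast; ring

/-- The polynomial `F(x,y) = y (n-1)! Σ_{ν=0}^{n-1} (-1)^(n+ν) (n+b-ν+1)_ν x^ν/ν! + (b+1)_n x^n`,
with `x = X 0`, `y = X 1`. -/
noncomputable def LVF (n : ℕ) (b : ℝ) : MvPolynomial (Fin 2) ℝ :=
  C ((Nat.factorial (n - 1) : ℝ)) * X 1 *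
      ∑ ν ∈ Finset.range n,
        C ((-1) ^ (n + ν) * poch ((n : ℝ) + b - ν + 1) ν / (Nat.factorial ν : ℝ)) * X 0 ^ ν
    + C (poch (b + 1) n) * X 0 ^ n

noncomputable def ac (n : ℕ) (b : ℝ) (ν : ℕ) : ℝ :=
  (Nat.factorial (n - 1) : ℝ) *
    ((-1) ^ (n + ν) * poch ((n : ℝ) + b - ν + 1) ν / (Nat.factorial ν : ℝ))

lemma rec_ac (n : ℕ) (b : ℝ) (i : ℕ) :
    ((i : ℝ) + 1) * ac n b (i + 1) + ((b + n) - i) * ac n b i = 0 := by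
  have h1 : ((n : ℝ) + b - (↑(i + 1) : ℕ) + 1) = (n : ℝ) + b - i := by push_cast; ring
  unfold ac
  rw [h1, poch_succ']
  have hfact : ((Nat.factorial (i + 1)) : ℝ) = ((i : ℝ) + 1) * (Nat.factorial i) := by
    rw [Nat.factorial_succ]; push_cast; ring
  rw [hfact, pow_add, pow_add]
  have hne : ((Nat.factorial i) : ℝ) ≠ 0 := Nat.cast_ne_zero.2 (Nat.factorial_ne_zero i)
  have hne1 : ((i : ℝ) + 1) ≠ 0 := by positivity
  field_simp
  ring

lemma last_ac (m : ℕ) (b : ℝ) :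
    ((b + (m + 1 : ℕ)) - m) * ac (m + 1) b m + poch (b + 1) (m + 1) = 0 := by
  unfold ac
  have h1 : ((m + 1 : ℕ) : ℝ) + b - m + 1 = b + 2 := by push_cast; ring
  have h2 : (m + 1) - 1 = m := rfl
  rw [h1, h2, poch_succ' (b+1) m]
  have hpow : ((-1 : ℝ)) ^ (m + 1 + m) = -1 := by
    rw [show m + 1 + m = 2 * m + 1 by ring, pow_succ, pow_mul]
    norm_num
  rw [hpow]
  have hne : ((Nat.factorial m) : ℝ) ≠ 0 := Nat.cast_ne_zero.2 (Nat.factorial_ne_zero m)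
  have h3 : ((m + 1 : ℕ) : ℝ) = (m : ℝ) + 1 := by push_cast; ring
  rw [h3]
  field_simp
  ring

lemma term_eq (n : ℕ) (b a : ℝ) (ν : ℕ) :
    X 0 * (1 - X 0) * (C a * ((ν : MvPolynomial (Fin 2) ℝ) * X 0 ^ (ν - 1)))
      + (C b + C (n : ℝ)) * X 0 * (C a * X 0 ^ ν)
    = C ((ν : ℝ) * a) * X 0 ^ ν + C (((b + n) - ν) * a) * X 0 ^ (ν + 1) := by
  have hc : ∀ k : ℕ, (C ((k : ℝ)) : MvPolynomial (Fin 2) ℝ) = (k : MvPolynomial (Fin 2) ℝ) :=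
    fun k => map_natCast C k
  cases ν with
  | zero => simp [C_mul, C_add, C_sub]; ring
  | succ k =>
      simp only [Nat.add_sub_cancel, C_mul, C_add, C_sub, hc, pow_succ]
      push_cast
      ring

lemma key (m : ℕ) (b : ℝ) :
    X 0 * (1 - X 0) * pderiv (0 : Fin 2)
        (∑ ν ∈ Finset.range (m + 1), C (ac (m + 1) b ν) * X 0 ^ ν)
      + (C b + C ((m + 1 : ℕ) : ℝ)) * X 0 *
        (∑ ν ∈ Finset.range (m + 1), C (ac (m + 1) b ν) * X 0 ^ ν)
      + C (poch (b + 1) (m + 1)) * X 0 ^ (m + 1) = 0 := by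
  set n := m + 1 with hn
  have hd : pderiv (0 : Fin 2) (∑ ν ∈ Finset.range n, C (ac n b ν) * X 0 ^ ν)
      = ∑ ν ∈ Finset.range n, C (ac n b ν) * ((ν : MvPolynomial (Fin 2) ℝ) * X 0 ^ (ν - 1)) := by
    rw [map_sum]
    refine Finset.sum_congr rfl fun ν _ => ?_
    rw [pderiv_C_mul, pderiv_pow, pderiv_X_self, mul_one]
  rw [hd, Finset.mul_sum, Finset.mul_sum, ← Finset.sum_add_distrib]
  have hterm : ∀ ν ∈ Finset.range n,
      X 0 * (1 - X 0) * (C (ac n b ν) * ((ν : MvPolynomial (Fin 2) ℝ) * X 0 ^ (ν - 1)))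
        + (C b + C ((n : ℕ) : ℝ)) * X 0 * (C (ac n b ν) * X 0 ^ ν)
      = C ((ν : ℝ) * ac n b ν) * X 0 ^ ν + C (((b + n) - ν) * ac n b ν) * X 0 ^ (ν + 1) :=
    fun ν _ => term_eq n b (ac n b ν) ν
  rw [Finset.sum_congr rfl hterm, Finset.sum_add_distrib]
  rw [Finset.sum_range_succ' (fun k => C ((k : ℝ) * ac n b k) * X 0 ^ k) m]
  rw [Finset.sum_range_succ (fun k => C (((b + (n:ℕ)) - k) * ac n b k) * X 0 ^ (k + 1)) m]
  simp only [Nat.cast_zero, zero_mul, map_zero, pow_zero, mul_one, add_zero]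
  have hmid : (∑ i ∈ Finset.range m, (C (((i + 1 : ℕ) : ℝ) * ac n b (i + 1)) : MvPolynomial (Fin 2) ℝ) * X 0 ^ (i + 1))
      + (∑ i ∈ Finset.range m, C (((b + n) - i) * ac n b i) * X 0 ^ (i + 1)) = 0 := by
    rw [← Finset.sum_add_distrib]
    refine Finset.sum_eq_zero fun i _ => ?_
    rw [← add_mul, ← C_add]
    have h := rec_ac n b i
    rw [hn] at h
    push_cast at h ⊢
    rw [hn]; push_cast; rw [h, C_0, zero_mul]
  have hlast : (C (((b + (n:ℕ)) - m) * ac n b m) : MvPolynomial (Fin 2) ℝ) * X 0 ^ (m + 1)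
      + C (poch (b + 1) n) * X 0 ^ n = 0 := by
    rw [hn, ← add_mul, ← C_add]
    have := last_ac m b
    rw [this, C_0, zero_mul]
  linear_combination hmid + hlast

lemma LVF_eq (n : ℕ) (b : ℝ) :
    LVF n b = X 1 * (∑ ν ∈ Finset.range n, C (ac n b ν) * X 0 ^ ν)
      + C (poch (b + 1) n) * X 0 ^ n := by
  unfold LVF ac
  congr 1
  rw [Finset.mul_sum, Finset.mul_sum]
  refine Finset.sum_congr rfl fun ν _ => ?_
  rw [C_mul]
  ring

/-- `{F = 0}` is an invariant algebraic curve of `ẋ = x(1-x)`, `ẏ = y(n+bx-y)`,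
with cofactor `n - nx - y`. -/
theorem LVF_invariant (n : ℕ) (b : ℝ) (hn : 1 ≤ n) :
    X 0 * (1 - X 0) * pderiv (0 : Fin 2) (LVF n b)
        + X 1 * (C (n : ℝ) + C b * X 0 - X 1) * pderiv (1 : Fin 2) (LVF n b) =
      (C (n : ℝ) - C (n : ℝ) * X 0 - X 1) * LVF n b := by
  obtain ⟨m, rfl⟩ : ∃ m, n = m + 1 := ⟨n - 1, (Nat.succ_pred_eq_of_pos hn).symm⟩
  rw [LVF_eq]
  set s : MvPolynomial (Fin 2) ℝ := ∑ ν ∈ Finset.range (m + 1), C (ac (m + 1) b ν) * X 0 ^ ν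
    with hs
  have hps : pderiv (1 : Fin 2) s = 0 := by
    rw [hs, map_sum]
    refine Finset.sum_eq_zero fun ν _ => ?_
    rw [pderiv_C_mul, pderiv_pow, pderiv_X_of_ne (by decide), mul_zero, mul_zero]
  have h1 : pderiv (1 : Fin 2) (X 1 * s + C (poch (b + 1) (m + 1)) * X 0 ^ (m + 1)) = s := by
    rw [map_add, pderiv_mul, pderiv_X_self, hps, pderiv_C_mul, pderiv_pow,
      pderiv_X_of_ne (by decide)]
    ring
  have h0 : pderiv (0 : Fin 2) (X 1 * s + C (poch (b + 1) (m + 1)) * X 0 ^ (m + 1))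
      = X 1 * pderiv (0 : Fin 2) s
        + C (poch (b + 1) (m + 1)) * (((m + 1 : ℕ) : MvPolynomial (Fin 2) ℝ) * X 0 ^ m) := by
    rw [map_add, pderiv_mul, pderiv_X_of_ne (by decide), pderiv_C_mul, pderiv_pow,
      pderiv_X_self, Nat.add_sub_cancel]
    ring
  rw [h0, h1]
  have hk := key m b
  have hcn : (C (((m + 1 : ℕ) : ℝ)) : MvPolynomial (Fin 2) ℝ)
      = ((m + 1 : ℕ) : MvPolynomial (Fin 2) ℝ) := map_natCast C _
  rw [← hcn] at *
  linear_combination (X 1 : MvPolynomial (Fin 2) ℝ) * hk
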